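/- Let s be a positive measure with compact support contained in an interval Δ ⊂ ℝ with infinitely many points in its support. Then for every z ∈ ℂ \ Δ, the Cauchy transform ŝ(z) = ∫ ds(x)/(z−x) is nonzero. -/

import Mathlib

open MeasureTheory Metric Set Complex

noncomputable section

/-- The Cauchy transform of a measure on ℝ, as a function of a complex variable. -/
def cauchy (s : Measure ℝ) (z : ℂ) : ℂ := ∫ x, (z - (x : ℂ))⁻¹ ∂s

/-- The support of a measure on ℝ. -/
def msupport (s : Measure ℝ) : Set ℝ := {x | ∀ ε > 0, 0 < s (ball x ε)}

lemma msupport_isClosed (s : Measure ℝ) : IsClosed (msupport s) := by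
  rw [← isOpen_compl_iff, isOpen_iff_mem_nhds]
  intro x hx
  simp only [msupport, mem_compl_iff, mem_setOf_eq, not_forall, not_lt, nonpos_iff_eq_zero] at hx
  obtain ⟨ε, hε, h0⟩ := hx
  have : ball x (ε / 2) ⊆ (msupport s)ᶜ := by
    intro y hy
    simp only [msupport, mem_compl_iff, mem_setOf_eq, not_forall, not_lt, nonpos_iff_eq_zero]
    refine ⟨ε / 2, half_pos hε, measure_mono_null ?_ h0⟩
    intro w hw
    have : dist w x < ε := by
      calc dist w x ≤ dist w y + dist y x := dist_triangle _ _ _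
        _ < ε / 2 + ε / 2 := add_lt_add (mem_ball.mp hw) (mem_ball.mp hy)
        _ = ε := add_halves ε
    exact mem_ball.mpr this
  exact Filter.mem_of_superset (ball_mem_nhds x (half_pos hε)) this

lemma ae_mem_msupport (s : Measure ℝ) : ∀ᵐ x ∂s, x ∈ msupport s := by
  rw [ae_iff]
  apply measure_null_of_locally_null
  intro x hx
  simp only [mem_setOf_eq, msupport, not_forall, not_lt, nonpos_iff_eq_zero] at hx
  obtain ⟨ε, hε, h0⟩ := hx
  exact ⟨ball x ε, mem_nhdsWithin_of_mem_nhds (ball_mem_nhds x hε), h0⟩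

lemma msupport_pos (s : Measure ℝ) (hne : (msupport s).Nonempty) : 0 < s (msupport s) := by
  obtain ⟨x, hx⟩ := hne
  have h1 : 0 < s (ball x 1) := hx 1 one_pos
  have h2 : s (ball x 1) ≤ s (msupport s) := by
    have hnull : s (msupport s)ᶜ = 0 := ae_iff.mp (ae_mem_msupport s)
    have := measure_add_measure_compl (μ := s) (msupport_isClosed s).measurableSet
    rw [hnull, add_zero] at this
    rw [this]
    exact measure_mono (subset_univ _)
  exact lt_of_lt_of_le h1 h2

lemma integrable_aux (s : Measure ℝ) [IsFiniteMeasure s] (z : ℂ) (d : ℝ) (hd : 0 < d)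
    (hb : ∀ x ∈ msupport s, d ≤ ‖z - (x : ℂ)‖) :
    Integrable (fun x : ℝ => (z - (x : ℂ))⁻¹) s := by
  apply Integrable.mono' (integrable_const d⁻¹)
  · exact ((measurable_const.sub Complex.measurable_ofReal).inv).aestronglyMeasurable
  · filter_upwards [ae_mem_msupport s] with x hx
    rw [norm_inv]
    exact inv_anti₀ hd (hb x hx)

lemma pos_aux (s : Measure ℝ) (g : ℝ → ℝ) (hint : Integrable g s)
    (hgpos : ∀ x ∈ msupport s, 0 < g x) (hm : 0 < s (msupport s)) :
    0 < ∫ x, g x ∂s := by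
  rw [integral_pos_iff_support_of_nonneg_ae ?_ hint]
  · exact lt_of_lt_of_le hm (measure_mono fun x hx => (hgpos x hx).ne')
  · filter_upwards [ae_mem_msupport s] with x hx using (hgpos x hx).le

/-- for a positive measure `s` with compact support contained in an interval
`Δ ⊂ ℝ`, with infinitely many points in its support, the Cauchy transform
`ŝ(z) = ∫ ds(x)/(z − x)` does not vanish at any `z ∈ ℂ \ Δ`. -/
theorem cauchy_transform_ne_zero
    (s : Measure ℝ) [IsFiniteMeasure s] (Δ : Set ℝ) (hΔ : Δ.OrdConnected)
    (hcomp : IsCompact (msupport s)) (hsupp : msupport s ⊆ Δ)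
    (hinf : (msupport s).Infinite) :
    ∀ z : ℂ, z ∉ Complex.ofReal '' Δ → cauchy s z ≠ 0 := by
  intro z hz h0
  have hne : (msupport s).Nonempty := hinf.nonempty
  have hm : 0 < s (msupport s) := msupport_pos s hne
  by_cases him : z.im = 0
  · -- z is real
    have hzre : z = (z.re : ℂ) := Complex.ext rfl (by simp [him])
    set r := z.re with hr
    have hrΔ : r ∉ Δ := fun h => hz ⟨r, h, hzre.symm⟩
    have hrm : r ∉ msupport s := fun h => hrΔ (hsupp h)
    set d := infDist r (msupport s) with hdd
    have hd : 0 < d := ((msupport_isClosed s).notMem_iff_infDist_pos hne).mp hrm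
    have hb : ∀ x ∈ msupport s, d ≤ ‖z - (x : ℂ)‖ := by
      intro x hx
      have h1 : d ≤ dist r x := infDist_le_dist_of_mem hx
      rw [hzre, ← Complex.ofReal_sub, Complex.norm_real, Real.norm_eq_abs, ← Real.dist_eq]
      exact h1
    have hint := integrable_aux s z d hd hb
    have hre : (cauchy s z).re = ∫ x, (r - x)⁻¹ ∂s := by
      rw [cauchy, ← RCLike.re_to_complex, ← integral_re hint]
      congr 1
      funext x
      rw [hzre]
      simp [← Complex.ofReal_sub, ← Complex.ofReal_inv]
    have hintg : Integrable (fun x => (r - x)⁻¹) s := by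
      have := hint.re
      refine this.congr (Filter.Eventually.of_forall fun x => ?_)
      simp only [hzre]
      simp [← Complex.ofReal_sub, ← Complex.ofReal_inv]
    have hre0 : (cauchy s z).re = 0 := by rw [h0]; simp
    obtain ⟨x0, hx0⟩ := hne
    have hx0r : x0 ≠ r := fun h => hrm (h ▸ hx0)
    rcases hx0r.lt_or_gt with hlt | hgt
    · -- all of msupport is < r
      have hall : ∀ x ∈ msupport s, x < r := by
        intro x hx
        by_contra hge
        push_neg at hge
        have hrx : r < x := lt_of_le_of_ne hge (fun h => hrm (h ▸ hx))
        exact hrΔ (hΔ.out (hsupp hx0) (hsupp hx) ⟨hlt.le, hrx.le⟩)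
      have : 0 < ∫ x, (r - x)⁻¹ ∂s := by
        apply pos_aux s _ hintg _ hm
        intro x hx
        exact inv_pos.mpr (sub_pos.mpr (hall x hx))
      rw [hre0] at hre
      exact absurd hre.symm this.ne'
    · -- all of msupport is > r
      have hall : ∀ x ∈ msupport s, r < x := by
        intro x hx
        by_contra hge
        push_neg at hge
        have hrx : x < r := lt_of_le_of_ne hge (fun h => hrm (h ▸ hx))
        exact hrΔ (hΔ.out (hsupp hx) (hsupp hx0) ⟨hrx.le, hgt.le⟩)
      have hpos : 0 < ∫ x, (x - r)⁻¹ ∂s := by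
        apply pos_aux s _ ?_ ?_ hm
        · have := hintg.neg
          refine this.congr (Filter.Eventually.of_forall fun x => ?_)
          simp [← inv_neg, neg_sub]
        · intro x hx
          exact inv_pos.mpr (sub_pos.mpr (hall x hx))
      have : ∫ x, (r - x)⁻¹ ∂s = -∫ x, (x - r)⁻¹ ∂s := by
        rw [← integral_neg]
        congr 1
        funext x
        simp [← inv_neg, neg_sub]
      rw [hre0] at hre
      rw [this] at hre
      have := hre.symm
      rw [neg_eq_zero] at this
      exact absurd this hpos.ne'
  · -- z has nonzero imaginary part
    have hb : ∀ x ∈ msupport s, |z.im| ≤ ‖z - (x : ℂ)‖ := by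
      intro x hx
      have : |(z - (x : ℂ)).im| ≤ ‖z - (x : ℂ)‖ := Complex.abs_im_le_norm _
      simpa using this
    have hint := integrable_aux s z |z.im| (abs_pos.mpr him) hb
    have hzx : ∀ x : ℝ, z - (x : ℂ) ≠ 0 := by
      intro x h
      apply him
      have := congrArg Complex.im h
      simpa using this
    have himeq : (cauchy s z).im = ∫ x, (-z.im) * (Complex.normSq (z - (x : ℂ)))⁻¹ ∂s := by
      rw [cauchy, ← RCLike.im_to_complex, ← integral_im hint]
      congr 1
      funext x
      rw [RCLike.im_to_complex, Complex.inv_im]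
      simp [div_eq_mul_inv]
    have hintg : Integrable (fun x : ℝ => (Complex.normSq (z - (x : ℂ)))⁻¹) s := by
      have h1 : Integrable (fun x : ℝ => (z - (x:ℂ))⁻¹.im) s := hint.im
      have h2 := h1.const_mul (-z.im)⁻¹
      refine h2.congr (Filter.Eventually.of_forall fun x => ?_)
      show (-z.im)⁻¹ * (z - (x : ℂ))⁻¹.im = (Complex.normSq (z - (x : ℂ)))⁻¹
      rw [Complex.inv_im]
      simp only [Complex.sub_im, Complex.ofReal_im, sub_zero]
      rw [div_eq_mul_inv]
      field_simp
    have hP : 0 < ∫ x, (Complex.normSq (z - (x : ℂ)))⁻¹ ∂s := by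
      apply pos_aux s _ hintg _ hm
      intro x _
      exact inv_pos.mpr (Complex.normSq_pos.mpr (hzx x))
    have him0 : (cauchy s z).im = 0 := by rw [h0]; simp
    rw [himeq, integral_const_mul] at him0
    rcases mul_eq_zero.mp him0 with h | h
    · exact him (neg_eq_zero.mp h)
    · exact hP.ne' h
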